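/- Let I be a nonempty set of non-negative integers and let S ⊆ ℕ^(I) be a gap absorbing monoid. Then for every s ∈ S \ {0} and every i ∈ I, ℓ(s) ≤ ℓ(s + e_i) ≤ ℓ(s) + 1. In particular, for every t ∈ (s + ℕ^(I)), the inequality ℓ(s) ≤ ℓ(t) holds. -/
import Mathlib


open Pointwise

section Defs

variable {M : Type*} [AddCommMonoid M] [PartialOrder M]

/-- `S* = S \ {0}`. -/
def Sstar (S : AddSubmonoid M) : Set M := (S : Set M) \ {0}

/-- The set of gaps `H(S)`, the complement of `S`. -/
def Gaps (S : AddSubmonoid M) : Set M := (S : Set M)ᶜ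

/-- The set of atoms `A(S) = S* \ (S* + S*)`. -/
def Atoms (S : AddSubmonoid M) : Set M := Sstar S \ (Sstar S + Sstar S)

/-- `S` is an ideal extension: `S* + M ⊆ S*`. -/
def IsIdealExtension (S : AddSubmonoid M) : Prop :=
  ∀ s ∈ Sstar S, ∀ x : M, s + x ∈ Sstar S

/-- `S` is gap absorbing. -/
def IsGapAbsorbing (S : AddSubmonoid M) : Prop :=
  Gaps S + Gaps S ⊆ Gaps S ∪ Atoms S ∪ (Atoms S + Atoms S) ∧
  Gaps S + Atoms S ⊆ Atoms S ∪ (Atoms S + Atoms S)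

/-- `M(S)`: minimal elements of `S*` with respect to `≤`. -/
def Mins (S : AddSubmonoid M) : Set M :=
  {m | m ∈ Sstar S ∧ ∀ t ∈ Sstar S, t ≤ m → t = m}

/-- `n`-fold sumset, with `0`-fold sumset `{0}`. -/
def nfold : ℕ → Set M → Set M
  | 0, _ => {0}
  | n + 1, X => nfold n X + X

/-- The set of lengths `L(s) = {n : s ∈ nA(S)}`. -/
def Lset (S : AddSubmonoid M) (s : M) : Set ℕ := {n | s ∈ nfold n (Atoms S)}

/-- The minimal factorization length `ℓ(s)`. -/
noncomputable def minLen (S : AddSubmonoid M) (s : M) : ℕ := sInf (Lset S s)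

/-- `X` is closed under intervals. -/
def ClosedUnderIntervals (X : Set M) : Prop :=
  ∀ u ∈ X, ∀ v ∈ X, u ≤ v → Set.Icc u v ⊆ X

/-- `a ≤_S b`, i.e. `b - a ∈ S`. -/
def dvdS (S : AddSubmonoid M) (a b : M) : Prop := ∃ t ∈ S, a + t = b

end Defs

section Aux
variable {I : Set ℕ} {S : AddSubmonoid (↥I →₀ ℕ)}


/-- degree -/
def deg (f : ↥I →₀ ℕ) : ℕ := f.sum fun _ n => n

lemma deg_add (a b : (↥I →₀ ℕ)) : deg (a + b) = deg a + deg b :=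
  Finsupp.sum_add_index' (fun _ => rfl) (fun _ _ _ => rfl)

lemma deg_eq_zero {a : (↥I →₀ ℕ)} (h : deg a = 0) : a = 0 := by
  ext j
  by_cases hj : j ∈ a.support
  · exact (Finset.sum_eq_zero_iff.mp h) j hj
  · simpa using Finsupp.notMem_support_iff.mp hj

lemma deg_single_one (i : ↥I) : deg (Finsupp.single i 1 : (↥I →₀ ℕ)) = 1 := by
  simp [deg]

lemma atoms_subset : Atoms S ⊆ (S : Set (↥I →₀ ℕ)) := fun a ha => ha.1.1

lemma nfold_subset : ∀ n, nfold n (Atoms S) ⊆ (S : Set (↥I →₀ ℕ))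
  | 0 => by intro x hx; simp only [nfold, Set.mem_singleton_iff] at hx; subst hx; exact S.zero_mem
  | n + 1 => by
    intro x hx
    obtain ⟨y, hy, a, ha, rfl⟩ := Set.mem_add.mp hx
    exact S.add_mem (nfold_subset n hy) (atoms_subset ha)

lemma mem_nfold_add {X : Set (↥I →₀ ℕ)} {a t : (↥I →₀ ℕ)} {n : ℕ} (ha : a ∈ X) (ht : t ∈ nfold n X) :
    a + t ∈ nfold (n + 1) X := by
  rw [add_comm a t]
  exact Set.add_mem_add ht ha

lemma nfold_add_nfold {X : Set (↥I →₀ ℕ)} : ∀ {n m : ℕ} {s t : (↥I →₀ ℕ)}, s ∈ nfold n X → t ∈ nfold m X →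
    s + t ∈ nfold (n + m) X := by
  intro n m
  induction m with
  | zero => intro s t hs ht; simp only [nfold, Set.mem_singleton_iff] at ht; simpa [ht] using hs
  | succ m ih =>
    intro s t hs ht
    obtain ⟨y, hy, a, ha, rfl⟩ := Set.mem_add.mp ht
    have := ih hs hy
    have : (s + y) + a ∈ nfold (n + m) X + X := Set.add_mem_add this ha
    simpa [nfold, add_assoc] using this

/-- every nonzero element of S is a sum of atoms -/
lemma exists_nfold {s : (↥I →₀ ℕ)} (hs : s ∈ S) (hs0 : s ≠ 0) :
    ∃ n, 1 ≤ n ∧ s ∈ nfold n (Atoms S) := by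
  obtain ⟨d, hd⟩ : ∃ d, deg s = d := ⟨_, rfl⟩
  induction d using Nat.strong_induction_on generalizing s with
  | _ d ih =>
    by_cases hatom : s ∈ Atoms S
    · exact ⟨1, le_refl 1, by simpa [nfold] using Set.add_mem_add (Set.mem_singleton (0:(↥I →₀ ℕ))) hatom⟩
    · have hst : s ∈ Sstar S := ⟨hs, hs0⟩
      have : s ∈ Sstar S + Sstar S := by
        by_contra hc; exact hatom ⟨hst, hc⟩
      obtain ⟨u, hu, v, hv, rfl⟩ := Set.mem_add.mp this
      have hdu : deg u < d := by
        have := deg_add u v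
        have hv1 : 1 ≤ deg v := by
          rcases Nat.eq_zero_or_pos (deg v) with h0 | h1
          · exact absurd (deg_eq_zero h0) hv.2
          · exact h1
        omega
      have hdv : deg v < d := by
        have := deg_add u v
        have hu1 : 1 ≤ deg u := by
          rcases Nat.eq_zero_or_pos (deg u) with h0 | h1
          · exact absurd (deg_eq_zero h0) hu.2
          · exact h1
        omega
      obtain ⟨n, hn1, hn⟩ := ih (deg u) hdu hu.1 hu.2 rfl
      obtain ⟨m, hm1, hm⟩ := ih (deg v) hdv hv.1 hv.2 rfl
      exact ⟨n + m, by omega, nfold_add_nfold hn hm⟩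

/-- S* is an ideal -/
lemma ideal (hS : IsGapAbsorbing S) {s : (↥I →₀ ℕ)} (hs : s ∈ S) (hs0 : s ≠ 0) (x : (↥I →₀ ℕ)) :
    s + x ∈ S ∧ s + x ≠ 0 := by
  constructor
  · by_cases hx : x ∈ S
    · exact S.add_mem hs hx
    · obtain ⟨n, hn1, hn⟩ := exists_nfold hs hs0
      obtain ⟨k, rfl⟩ : ∃ k, n = k + 1 := ⟨n - 1, by omega⟩
      obtain ⟨r, hr, a, ha, rfl⟩ := Set.mem_add.mp hn
      have hxa : x + a ∈ Atoms S ∪ (Atoms S + Atoms S) := hS.2 (Set.add_mem_add hx ha)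
      have hxa' : x + a ∈ S := by
        rcases hxa with h | h
        · exact atoms_subset h
        · obtain ⟨a1, ha1, a2, ha2, heq⟩ := Set.mem_add.mp h
          rw [← heq]
          exact S.add_mem (atoms_subset ha1) (atoms_subset ha2)
      have : r + a + x = r + (x + a) := by abel
      rw [this]
      exact S.add_mem (nfold_subset _ hr) hxa'
  · intro h
    exact hs0 (add_eq_zero.mp h).1

/-- extraction of an atom with positive i-coordinate -/
lemma extract {X : Set (↥I →₀ ℕ)} (i : ↥I) : ∀ {n : ℕ} {t : (↥I →₀ ℕ)}, t ∈ nfold n X → t i ≠ 0 →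
    ∃ b ∈ X, ∃ r ∈ nfold (n - 1) X, t = b + r ∧ b i ≠ 0 := by
  intro n
  induction n with
  | zero =>
    intro t ht hti
    simp only [nfold, Set.mem_singleton_iff] at ht
    subst ht; simp at hti
  | succ n ih =>
    intro t ht hti
    obtain ⟨r, hr, b, hb, rfl⟩ := Set.mem_add.mp ht
    by_cases hbi : b i ≠ 0
    · exact ⟨b, hb, r, by simpa using hr, by rw [add_comm], hbi⟩
    · push_neg at hbi
      have hri : r i ≠ 0 := by
        have : (r + b) i = r i + b i := rfl
        rw [this, hbi] at hti; simpa using hti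
      obtain ⟨b', hb', r', hr', heq, hb'i⟩ := ih hr hri
      rcases n with _ | m
      · simp only [nfold, Set.mem_singleton_iff] at hr
        rw [hr] at hri; simp at hri
      · refine ⟨b', hb', r' + b, ?_, ?_, hb'i⟩
        · simpa [nfold] using Set.add_mem_add hr' hb
        · rw [heq]; abel

/-- c + e_i atom, c in S*, implies c atom -/
lemma atom_sub (hS : IsGapAbsorbing S) {c : (↥I →₀ ℕ)} {i : ↥I}
    (hb : c + Finsupp.single i 1 ∈ Atoms S) (hc : c ∈ S) (hc0 : c ≠ 0) : c ∈ Atoms S := by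
  refine ⟨⟨hc, hc0⟩, ?_⟩
  intro hcc
  obtain ⟨u, hu, v, hv, heq⟩ := Set.mem_add.mp hcc
  apply hb.2
  have hv' := ideal hS hv.1 hv.2 (Finsupp.single i 1)
  refine Set.mem_add.mpr ⟨u, hu, v + Finsupp.single i 1, ⟨hv'.1, hv'.2⟩, ?_⟩
  rw [← add_assoc, heq]

lemma minLen_le {s : (↥I →₀ ℕ)} {n : ℕ} (h : s ∈ nfold n (Atoms S)) : minLen S s ≤ n :=
  Nat.sInf_le (show n ∈ Lset S s from h)

lemma minLen_zero : minLen S (0 : (↥I →₀ ℕ)) = 0 :=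
  Nat.eq_zero_of_le_zero (Nat.sInf_le (by simp [Lset, nfold]))

/-- key step: ℓ(s) ≤ ℓ(s + e_i) -/
lemma step_le (hS : IsGapAbsorbing S) {s : (↥I →₀ ℕ)} (hs : s ∈ S) (i : ↥I) :
    minLen S s ≤ minLen S (s + Finsupp.single i 1) := by
  by_cases hs0 : s = 0
  · simp [hs0, minLen_zero]
  · have hse := ideal hS hs hs0 (Finsupp.single i 1)
    obtain ⟨n0, hn01, hn0⟩ := exists_nfold hse.1 hse.2
    have hne : (Lset S (s + Finsupp.single i 1)).Nonempty := ⟨n0, hn0⟩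
    set m := minLen S (s + Finsupp.single i 1) with hm
    have hmem : s + Finsupp.single i 1 ∈ nfold m (Atoms S) := Nat.sInf_mem hne
    have hti : ((s + Finsupp.single i 1 : ↥I →₀ ℕ)) i ≠ 0 := by
      have : ((s + Finsupp.single i 1 : ↥I →₀ ℕ)) i = s i + 1 := by simp
      omega
    obtain ⟨b, hb, r, hr, heq, hbi⟩ := extract i hmem hti
    have hm1 : 1 ≤ m := by
      rcases Nat.eq_zero_or_pos m with h0 | h1
      · rw [h0] at hmem
        simp only [nfold, Set.mem_singleton_iff] at hmem
        exact absurd (add_eq_zero.mp hmem).2 (by simp)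
      · exact h1
    -- b = c + e_i
    set c := b - Finsupp.single i 1 with hcdef
    have hbc : c + Finsupp.single i 1 = b := by
      rw [hcdef, tsub_add_cancel_of_le]
      rwa [Finsupp.single_le_iff, Nat.one_le_iff_ne_zero]
    have hsrc : s = c + r := by
      apply add_right_cancel (b := Finsupp.single i 1)
      rw [heq, add_assoc, add_comm r, ← add_assoc, hbc]
    by_cases hc0 : c = 0
    · -- s = r
      have : s ∈ nfold (m - 1) (Atoms S) := by rw [hsrc, hc0, zero_add]; exact hr
      exact le_trans (minLen_le this) (by omega)
    · by_cases hcS : c ∈ S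
      · -- c is an atom
        have hca : c ∈ Atoms S := atom_sub hS (hbc ▸ hb) hcS hc0
        have : s ∈ nfold (m - 1 + 1) (Atoms S) := hsrc ▸ mem_nfold_add hca hr
        exact le_trans (minLen_le this) (by omega)
      · -- c is a gap; then m ≥ 2
        have hm2 : 2 ≤ m := by
          by_contra hcon
          push_neg at hcon
          have hmeq : m = 1 := by omega
          rw [hmeq] at hr
          norm_num [nfold, Set.mem_singleton_iff] at hr
          rw [hr, add_zero] at hsrc
          exact hcS (hsrc ▸ hs)
        obtain ⟨k, hk⟩ : ∃ k, m - 1 = k + 1 := ⟨m - 2, by omega⟩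
        rw [hk] at hr
        obtain ⟨r', hr', b2, hb2, rfl⟩ := Set.mem_add.mp hr
        have hcb2 : c + b2 ∈ Atoms S ∪ (Atoms S + Atoms S) := hS.2 (Set.add_mem_add hcS hb2)
        have hs' : s = r' + (c + b2) := by rw [hsrc]; abel
        rcases hcb2 with h | h
        · have : s ∈ nfold (k + 1) (Atoms S) := by
            rw [hs']; exact Set.add_mem_add hr' h
          exact le_trans (minLen_le this) (by omega)
        · obtain ⟨a1, ha1, a2, ha2, hca⟩ := Set.mem_add.mp h
          have : s ∈ nfold (k + 1 + 1) (Atoms S) := by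
            rw [hs', ← hca, ← add_assoc]
            exact Set.add_mem_add (Set.add_mem_add hr' ha1) ha2
          exact le_trans (minLen_le this) (by omega)

/-- key step: ℓ(s + e_i) ≤ ℓ(s) + 1 -/
lemma step_ge (hS : IsGapAbsorbing S) {s : (↥I →₀ ℕ)} (hs : s ∈ S) (i : ↥I) :
    minLen S (s + Finsupp.single i 1) ≤ minLen S s + 1 := by
  by_cases he : (Finsupp.single i 1 : (↥I →₀ ℕ)) ∈ S
  · -- e_i is an atom
    have hea : (Finsupp.single i 1 : (↥I →₀ ℕ)) ∈ Atoms S := by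
      refine ⟨⟨he, by simp⟩, ?_⟩
      intro hcc
      obtain ⟨u, hu, v, hv, heq⟩ := Set.mem_add.mp hcc
      have := deg_add u v
      rw [heq, deg_single_one] at this
      have hu1 : 1 ≤ deg u := Nat.one_le_iff_ne_zero.mpr (fun h => hu.2 (deg_eq_zero h))
      have hv1 : 1 ≤ deg v := Nat.one_le_iff_ne_zero.mpr (fun h => hv.2 (deg_eq_zero h))
      omega
    by_cases hs0 : s = 0
    · subst hs0
      have : (0 : (↥I →₀ ℕ)) + Finsupp.single i 1 ∈ nfold 1 (Atoms S) := by
        simpa [nfold] using Set.add_mem_add (Set.mem_singleton (0:(↥I →₀ ℕ))) hea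
      calc minLen S ((0:(↥I →₀ ℕ)) + Finsupp.single i 1) ≤ 1 := minLen_le this
        _ ≤ _ := by omega
    · have hne : (Lset S s).Nonempty := by
        obtain ⟨n, _, hn⟩ := exists_nfold hs hs0; exact ⟨n, hn⟩
      have hmem : s ∈ nfold (minLen S s) (Atoms S) := Nat.sInf_mem hne
      exact minLen_le (Set.add_mem_add hmem hea)
  · -- e_i is a gap
    by_cases hs0 : s = 0
    · -- Lset of e_i is empty or not; either way sInf could be 0; show ≤ 1 by emptiness
      subst hs0
      have : Lset S ((0:(↥I →₀ ℕ)) + Finsupp.single i 1) = ∅ := by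
        ext n
        simp only [Lset, Set.mem_setOf_eq, Set.mem_empty_iff_false, iff_false, zero_add]
        intro hmem
        exact he (nfold_subset n hmem)
      rw [minLen, this]
      simp
    · have hne : (Lset S s).Nonempty := by
        obtain ⟨n, _, hn⟩ := exists_nfold hs hs0; exact ⟨n, hn⟩
      set n := minLen S s with hn
      have hmem : s ∈ nfold n (Atoms S) := Nat.sInf_mem hne
      have hn1 : 1 ≤ n := by
        rcases Nat.eq_zero_or_pos n with h0 | h1
        · rw [h0] at hmem; simp only [nfold, Set.mem_singleton_iff] at hmem
          exact absurd hmem hs0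
        · exact h1
      obtain ⟨k, hk⟩ : ∃ k, n = k + 1 := ⟨n - 1, by omega⟩
      rw [hk] at hmem
      obtain ⟨r, hr, a, ha, rfl⟩ := Set.mem_add.mp hmem
      have hea : Finsupp.single i 1 + a ∈ Atoms S ∪ (Atoms S + Atoms S) := hS.2 (Set.add_mem_add he ha)
      rcases hea with h | h
      · have : r + a + Finsupp.single i 1 ∈ nfold (k + 1) (Atoms S) := by
          have : r + a + Finsupp.single i 1 = r + (Finsupp.single i 1 + a) := by abel
          rw [this]; exact Set.add_mem_add hr h
        exact le_trans (minLen_le this) (by omega)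
      · obtain ⟨a1, ha1, a2, ha2, hca⟩ := Set.mem_add.mp h
        have : r + a + Finsupp.single i 1 ∈ nfold (k + 2) (Atoms S) := by
          have heq2 : r + a + Finsupp.single i 1 = r + a1 + a2 := by
            rw [add_assoc r a1 a2, hca]; abel
          rw [heq2]
          exact Set.add_mem_add (Set.add_mem_add hr ha1) ha2
        exact le_trans (minLen_le this) (by omega)

lemma step_all (hS : IsGapAbsorbing S) {s : (↥I →₀ ℕ)} (hs : s ∈ S) (x : (↥I →₀ ℕ)) :
    minLen S s ≤ minLen S (s + x) := by
  by_cases hs0 : s = 0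
  · simp [hs0, minLen_zero]
  · obtain ⟨d, hd⟩ : ∃ d, deg x = d := ⟨_, rfl⟩
    induction d using Nat.strong_induction_on generalizing x with
    | _ d ih =>
      by_cases hx0 : x = 0
      · simp [hx0]
      · obtain ⟨i, hi⟩ : ∃ i, x i ≠ 0 := by
          by_contra hc; push_neg at hc; exact hx0 (Finsupp.ext fun a => hc a)
        set x' := x - Finsupp.single i 1 with hx'
        have hxx : x' + Finsupp.single i 1 = x := by
          rw [hx', tsub_add_cancel_of_le]
          rwa [Finsupp.single_le_iff, Nat.one_le_iff_ne_zero]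
        have hdx : deg x' < d := by
          have := deg_add x' (Finsupp.single i 1)
          rw [hxx, deg_single_one, hd] at this
          omega
        have h1 : minLen S s ≤ minLen S (s + x') := ih (deg x') hdx x' rfl
        have h2 : minLen S (s + x') ≤ minLen S (s + x' + Finsupp.single i 1) :=
          step_le hS (ideal hS hs hs0 x').1 i
        rw [add_assoc, hxx] at h2
        exact le_trans h1 h2

end Aux

theorem statement7 (I : Set ℕ) (hI : I.Nonempty) (S : AddSubmonoid (↥I →₀ ℕ))
    (hS : IsGapAbsorbing S) :
    ∀ s ∈ S,
      (∀ i : ↥I, minLen S s ≤ minLen S (s + Finsupp.single i 1) ∧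
        minLen S (s + Finsupp.single i 1) ≤ minLen S s + 1) ∧
      ∀ x : ↥I →₀ ℕ, minLen S s ≤ minLen S (s + x) := by
  intro s hs
  exact ⟨fun i => ⟨step_le hS hs i, step_ge hS hs i⟩, fun x => step_all hS hs x⟩
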